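/- For RDTs D₁ and D₂ on the same scheme (maps T → L with finite support, L a complete linear order): D₁ ⊑ D₂ if and only if there exists an order-preserving map f : L → L such that D₂ = f ∘ D₁. -/

import Mathlib

/-- For RDTs (finite-support maps into a complete linear order),
`D₁ ⊑ D₂` iff there is an order-preserving map `f : L → L` with
`D₂ = f ∘ D₁`. -/
theorem ordinalIncl_iff_monotone_factor {L : Type*} [CompleteLinearOrder L]
    {T : Type*} (D₁ D₂ : T → L)
    (h₁ : {r : T | ⊥ < D₁ r}.Finite) (h₂ : {r : T | ⊥ < D₂ r}.Finite) :
    (∀ r : T, {r' : T | D₁ r ≤ D₁ r'} ⊆ {r' : T | D₂ r ≤ D₂ r'}) ↔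
      ∃ f : L → L, Monotone f ∧ ∀ r : T, D₂ r = f (D₁ r) := by
  constructor
  · intro h
    refine ⟨fun x => sSup (D₂ '' {r | D₁ r ≤ x}), ?_, ?_⟩
    · intro a b hab
      exact sSup_le_sSup (Set.image_mono (f := _) fun r hr => le_trans hr hab)
    · intro r
      apply le_antisymm
      · exact le_sSup ⟨r, le_refl _, rfl⟩
      · apply sSup_le
        rintro y ⟨r', hr', rfl⟩
        exact h r' (by exact hr')
  · rintro ⟨f, hf, hfe⟩ r r' hr
    simp only [Set.mem_setOf_eq] at *
    rw [hfe r, hfe r']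
    exact hf hr
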